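/- Let $U$ be a random variable with distribution $G$, let $Z$ be a random variable with conditional density $p(z \mid u)$ given $U = u$ with respect to a measure $\lambda$, and let $Y(0), Y(1)$ be random variables with $(Y(0), Y(1)) \perp Z \mid U$. Let $c \in \mathbb{R}$, $W = \mathbf{1}\{Z \geq c\}$, $Y = Y(W)$, and let $\gamma_+, \gamma_- : \mathbb{R} \to \mathbb{R}$ be bounded measurable weight functions. Define $\alpha_{(w)}(u) = \mathbb{E}[Y(w) \mid U = u]$, $\tau(u) = \alpha_{(1)}(u) - \alpha_{(0)}(u)$, $h_+(u) = \int_{[c,\infty)} \gamma_+(z) p(z \mid u)\, d\lambda(z)$ and $h_-(u) = \int_{(-\infty,c)} \gamma_-(z) p(z \mid u)\, d\lambda(z)$. Then $\mathbb{E}[\gamma_+(Z) Y \mathbf{1}\{Z \geq c\}] - \mathbb{E}[\gamma_-(Z) Y \mathbf{1}\{Z < c\}] = \int h_+(u)\tau(u)\, dG(u) + \int (h_+(u) - h_-(u))\alpha_{(0)}(u)\, dG(u)$. -/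

import Mathlib

open MeasureTheory

lemma Hmeas {lam : Measure ℝ} [SigmaFinite lam] {p : ℝ → ℝ → ℝ}
    (hpm : Measurable (Function.uncurry p)) {g : ℝ → ℝ} (hgm : Measurable g) :
    Measurable fun u => ∫ z, g z * p z u ∂lam := by
  have h : StronglyMeasurable fun q : ℝ × ℝ => g q.2 * p q.2 q.1 := by
    apply Measurable.stronglyMeasurable
    exact (hgm.comp measurable_snd).mul (hpm.comp (measurable_snd.prodMk measurable_fst))
  exact (h.integral_prod_right').measurable

lemma key_integrable {Ω : Type*} [MeasurableSpace Ω] (P : Measure Ω) [IsProbabilityMeasure P]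
    (Yw U Z : Ω → ℝ) (CY : ℝ) (hYb : ∀ ω, |Yw ω| ≤ CY)
    (G : Measure ℝ) [IsProbabilityMeasure G]
    (F : ℝ → ℝ) (hFm : Measurable F)
    (g : ℝ → ℝ) (Cg : ℝ) (hgb : ∀ z, |g z| ≤ Cg)
    (hJ : ∀ φ : ℝ → ℝ, Measurable φ → (∃ Cf, ∀ u, |φ u| ≤ Cf) →
      ∫ ω, Yw ω * g (Z ω) * φ (U ω) ∂P = ∫ u, F u * φ u ∂G) :
    Integrable F G := by
  set B : ℝ := |CY| * |Cg| with hB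
  set φn : ℕ → ℝ → ℝ := fun n u => if |F u| ≤ (n : ℝ) then (if F u < 0 then -1 else 1) else 0
    with hφn
  have hφnm : ∀ n, Measurable (φn n) := by
    intro n
    apply Measurable.ite (measurableSet_le hFm.abs measurable_const)
    · exact Measurable.ite (measurableSet_lt hFm measurable_const) measurable_const
        measurable_const
    · exact measurable_const
  have hφnb : ∀ n u, |φn n u| ≤ 1 := by
    intro n u
    simp only [hφn]
    split <;> [skip; norm_num]
    split <;> norm_num
  have hmul : ∀ n u, F u * φn n u = if |F u| ≤ (n : ℝ) then |F u| else 0 := by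
    intro n u
    simp only [hφn]
    by_cases h : |F u| ≤ (n : ℝ)
    · simp only [h, if_true]
      by_cases h2 : F u < 0
      · simp [h2, abs_of_neg h2]
      · simp [h2, abs_of_nonneg (not_lt.1 h2)]
    · simp [h]
  have hIle : ∀ n, ∫ u, F u * φn n u ∂G ≤ B := by
    intro n
    rw [← hJ (φn n) (hφnm n) ⟨1, hφnb n⟩]
    have hb : ∀ ω, ‖Yw ω * g (Z ω) * φn n (U ω)‖ ≤ B := by
      intro ω
      rw [Real.norm_eq_abs, abs_mul, abs_mul]
      calc |Yw ω| * |g (Z ω)| * |φn n (U ω)|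
          ≤ |CY| * |Cg| * 1 := by
            apply mul_le_mul (mul_le_mul ((hYb ω).trans (le_abs_self _))
              ((hgb _).trans (le_abs_self _)) (abs_nonneg _) (abs_nonneg _))
              (hφnb n (U ω)) (abs_nonneg _)
            positivity
        _ = B := by rw [hB, mul_one]
    calc ∫ ω, Yw ω * g (Z ω) * φn n (U ω) ∂P
        ≤ ‖∫ ω, Yw ω * g (Z ω) * φn n (U ω) ∂P‖ := le_abs_self _
      _ ≤ B * (P Set.univ).toReal := norm_integral_le_of_norm_le_const
          (Filter.Eventually.of_forall hb)
      _ = B := by simp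
  have hfnInt : ∀ n : ℕ, Integrable (fun u => if |F u| ≤ (n:ℝ) then |F u| else 0) G := by
    intro n
    refine (integrable_const (n : ℝ)).mono'
      ((Measurable.ite (measurableSet_le hFm.abs measurable_const) hFm.abs
        measurable_const).aestronglyMeasurable) (Filter.Eventually.of_forall fun u => ?_)
    rw [Real.norm_eq_abs]
    split
    · next h => rwa [abs_abs]
    · simp
  have hfnnn : ∀ n : ℕ, ∀ u, (0:ℝ) ≤ if |F u| ≤ (n:ℝ) then |F u| else 0 := by
    intro n u; split <;> simp [abs_nonneg]
  refine ⟨hFm.aestronglyMeasurable, ?_⟩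
  rw [hasFiniteIntegral_iff_norm]
  have hsup : ∀ u, (⨆ n : ℕ, ENNReal.ofReal (if |F u| ≤ (n:ℝ) then |F u| else 0))
      = ENNReal.ofReal ‖F u‖ := by
    intro u
    apply le_antisymm
    · exact iSup_le fun n => ENNReal.ofReal_le_ofReal (by
        rw [Real.norm_eq_abs]; split <;> simp [abs_nonneg])
    · obtain ⟨n, hn⟩ := exists_nat_ge |F u|
      exact le_iSup_of_le n (by rw [if_pos hn, Real.norm_eq_abs])
  calc ∫⁻ u, ENNReal.ofReal ‖F u‖ ∂G
      = ∫⁻ u, ⨆ n : ℕ, ENNReal.ofReal (if |F u| ≤ (n:ℝ) then |F u| else 0) ∂G := by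
        apply lintegral_congr; intro u; rw [hsup u]
    _ = ⨆ n : ℕ, ∫⁻ u, ENNReal.ofReal (if |F u| ≤ (n:ℝ) then |F u| else 0) ∂G := by
        apply lintegral_iSup
        · intro n
          exact (Measurable.ite (measurableSet_le hFm.abs measurable_const) hFm.abs
            measurable_const).ennreal_ofReal
        · intro n m hnm u
          apply ENNReal.ofReal_le_ofReal
          by_cases h : |F u| ≤ (n:ℝ)
          · rw [if_pos h, if_pos (h.trans (by exact_mod_cast Nat.cast_le.mpr hnm))]
          · rw [if_neg h]; exact hfnnn m u
    _ ≤ ENNReal.ofReal B := by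
        apply iSup_le; intro n
        rw [← ofReal_integral_eq_lintegral_ofReal (hfnInt n)
          (Filter.Eventually.of_forall (hfnnn n))]
        apply ENNReal.ofReal_le_ofReal
        calc ∫ u, (if |F u| ≤ (n:ℝ) then |F u| else 0) ∂G
            = ∫ u, F u * φn n u ∂G := by
              apply integral_congr_ae; apply Filter.Eventually.of_forall
              intro u; exact (hmul n u).symm
          _ ≤ B := hIle n
    _ < ⊤ := ENNReal.ofReal_lt_top


/-- Bias decomposition (Theorem 1) for weighted RD estimators with a noisy
running variable. The conditional density of `Z` given `U`, the exogeneity of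
the measurement noise, and the definition of `α₀, α₁` as conditional means of
the potential outcomes given `U` are encoded in integrated form against bounded
measurable test functions (`hJoint0`, `hJoint1`). -/
theorem stmt0
    {Ω : Type*} [MeasurableSpace Ω] (P : Measure Ω) [IsProbabilityMeasure P]
    (U Z Y0 Y1 : Ω → ℝ)
    (hUm : Measurable U) (hZm : Measurable Z)
    (hY0m : Measurable Y0) (hY1m : Measurable Y1)
    (CY : ℝ) (hY0b : ∀ ω, |Y0 ω| ≤ CY) (hY1b : ∀ ω, |Y1 ω| ≤ CY)
    (G : Measure ℝ) [IsProbabilityMeasure G]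
    (lam : Measure ℝ) [SigmaFinite lam]
    (p : ℝ → ℝ → ℝ) (hpm : Measurable (Function.uncurry p)) (hpnn : ∀ z u, 0 ≤ p z u)
    (α0 α1 τ : ℝ → ℝ) (hα0m : Measurable α0) (hα1m : Measurable α1)
    (hτdef : ∀ u, τ u = α1 u - α0 u)
    (hJoint0 : ∀ g φf : ℝ → ℝ, Measurable g → Measurable φf →
      (∃ Cg, ∀ z, |g z| ≤ Cg) → (∃ Cf, ∀ u, |φf u| ≤ Cf) →
      ∫ ω, Y0 ω * g (Z ω) * φf (U ω) ∂P
        = ∫ u, α0 u * (∫ z, g z * p z u ∂lam) * φf u ∂G)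
    (hJoint1 : ∀ g φf : ℝ → ℝ, Measurable g → Measurable φf →
      (∃ Cg, ∀ z, |g z| ≤ Cg) → (∃ Cf, ∀ u, |φf u| ≤ Cf) →
      ∫ ω, Y1 ω * g (Z ω) * φf (U ω) ∂P
        = ∫ u, α1 u * (∫ z, g z * p z u ∂lam) * φf u ∂G)
    (c : ℝ) (γp γm : ℝ → ℝ) (hγpm : Measurable γp) (hγmm : Measurable γm)
    (Cγ : ℝ) (hγpb : ∀ z, |γp z| ≤ Cγ) (hγmb : ∀ z, |γm z| ≤ Cγ)
    (hplus hminus : ℝ → ℝ)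
    (hhp : ∀ u, hplus u = ∫ z in Set.Ici c, γp z * p z u ∂lam)
    (hhm : ∀ u, hminus u = ∫ z in Set.Iio c, γm z * p z u ∂lam) :
    (∫ ω, (if c ≤ Z ω then γp (Z ω) * (if c ≤ Z ω then Y1 ω else Y0 ω) else 0) ∂P)
      - (∫ ω, (if Z ω < c then γm (Z ω) * (if c ≤ Z ω then Y1 ω else Y0 ω) else 0) ∂P)
    = (∫ u, hplus u * τ u ∂G) + (∫ u, (hplus u - hminus u) * α0 u ∂G) := by
  set gP : ℝ → ℝ := fun z => if c ≤ z then γp z else 0 with hgp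
  set gM : ℝ → ℝ := fun z => if z < c then γm z else 0 with hgmd
  have hgPm : Measurable gP := Measurable.ite measurableSet_Ici hγpm measurable_const
  have hgMm : Measurable gM := Measurable.ite measurableSet_Iio hγmm measurable_const
  have hgPb : ∀ z, |gP z| ≤ |Cγ| := by
    intro z; simp only [hgp]
    split
    · exact (hγpb z).trans (le_abs_self _)
    · simp
  have hgMb : ∀ z, |gM z| ≤ |Cγ| := by
    intro z; simp only [hgmd]
    split
    · exact (hγmb z).trans (le_abs_self _)
    · simp
  have hp_eq : ∀ u, hplus u = ∫ z, gP z * p z u ∂lam := by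
    intro u
    rw [hhp u, ← integral_indicator measurableSet_Ici]
    apply integral_congr_ae; apply Filter.Eventually.of_forall; intro z
    simp only [Set.indicator_apply, Set.mem_Ici, hgp, ite_mul, zero_mul]
  have hm_eq : ∀ u, hminus u = ∫ z, gM z * p z u ∂lam := by
    intro u
    rw [hhm u, ← integral_indicator measurableSet_Iio]
    apply integral_congr_ae; apply Filter.Eventually.of_forall; intro z
    simp only [Set.indicator_apply, Set.mem_Iio, hgmd, ite_mul, zero_mul]
  have hplusm : Measurable hplus := by
    rw [funext hp_eq]; exact Hmeas hpm hgPm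
  have hminusm : Measurable hminus := by
    rw [funext hm_eq]; exact Hmeas hpm hgMm
  have hL1 : (∫ ω, (if c ≤ Z ω then γp (Z ω) * (if c ≤ Z ω then Y1 ω else Y0 ω) else 0) ∂P)
      = ∫ u, α1 u * hplus u ∂G := by
    have e1 : ∀ ω, (if c ≤ Z ω then γp (Z ω) * (if c ≤ Z ω then Y1 ω else Y0 ω) else 0)
        = Y1 ω * gP (Z ω) * (fun _ : ℝ => (1:ℝ)) (U ω) := by
      intro ω
      by_cases h : c ≤ Z ω
      · simp only [if_pos h, hgp]; ring
      · simp [hgp, h]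
    rw [integral_congr_ae (Filter.Eventually.of_forall e1),
      hJoint1 gP (fun _ => 1) hgPm measurable_const ⟨|Cγ|, hgPb⟩ ⟨1, fun u => by norm_num⟩]
    apply integral_congr_ae; apply Filter.Eventually.of_forall; intro u
    beta_reduce
    rw [mul_one, hp_eq u]
  have hL2 : (∫ ω, (if Z ω < c then γm (Z ω) * (if c ≤ Z ω then Y1 ω else Y0 ω) else 0) ∂P)
      = ∫ u, α0 u * hminus u ∂G := by
    have e2 : ∀ ω, (if Z ω < c then γm (Z ω) * (if c ≤ Z ω then Y1 ω else Y0 ω) else 0)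
        = Y0 ω * gM (Z ω) * (fun _ : ℝ => (1:ℝ)) (U ω) := by
      intro ω
      by_cases h : Z ω < c
      · rw [if_pos h, if_neg (not_le.mpr h)]
        simp only [hgmd, if_pos h]; ring
      · simp [hgmd, h]
    rw [integral_congr_ae (Filter.Eventually.of_forall e2),
      hJoint0 gM (fun _ => 1) hgMm measurable_const ⟨|Cγ|, hgMb⟩ ⟨1, fun u => by norm_num⟩]
    apply integral_congr_ae; apply Filter.Eventually.of_forall; intro u
    beta_reduce
    rw [mul_one, hm_eq u]
  have I1 : Integrable (fun u => α1 u * hplus u) G := by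
    apply key_integrable P Y1 U Z CY hY1b G _ (hα1m.mul hplusm) gP |Cγ| hgPb
    intro φ hφm hφb
    rw [hJoint1 gP φ hgPm hφm ⟨|Cγ|, hgPb⟩ hφb]
    apply integral_congr_ae; apply Filter.Eventually.of_forall; intro u
    beta_reduce
    rw [Pi.mul_apply, hp_eq u]
  have I2 : Integrable (fun u => α0 u * hplus u) G := by
    apply key_integrable P Y0 U Z CY hY0b G _ (hα0m.mul hplusm) gP |Cγ| hgPb
    intro φ hφm hφb
    rw [hJoint0 gP φ hgPm hφm ⟨|Cγ|, hgPb⟩ hφb]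
    apply integral_congr_ae; apply Filter.Eventually.of_forall; intro u
    beta_reduce
    rw [Pi.mul_apply, hp_eq u]
  have I3 : Integrable (fun u => α0 u * hminus u) G := by
    apply key_integrable P Y0 U Z CY hY0b G _ (hα0m.mul hminusm) gM |Cγ| hgMb
    intro φ hφm hφb
    rw [hJoint0 gM φ hgMm hφm ⟨|Cγ|, hgMb⟩ hφb]
    apply integral_congr_ae; apply Filter.Eventually.of_forall; intro u
    beta_reduce
    rw [Pi.mul_apply, hm_eq u]
  have hR1 : ∫ u, hplus u * τ u ∂G
      = (∫ u, α1 u * hplus u ∂G) - ∫ u, α0 u * hplus u ∂G := by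
    rw [← integral_sub I1 I2]
    apply integral_congr_ae; apply Filter.Eventually.of_forall; intro u
    beta_reduce
    rw [hτdef u]; ring
  have hR2 : ∫ u, (hplus u - hminus u) * α0 u ∂G
      = (∫ u, α0 u * hplus u ∂G) - ∫ u, α0 u * hminus u ∂G := by
    rw [← integral_sub I2 I3]
    apply integral_congr_ae; apply Filter.Eventually.of_forall; intro u
    beta_reduce
    ring
  rw [hL1, hL2, hR1, hR2]
  ring
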